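/- Let G be a Lie group with a right-invariant metric d^G, Γ ≤ G a discrete subgroup, X = G/Γ with the quotient metric d^X, and a ∈ G. Let K ⊆ X be a compact a-invariant set and ε₀ > 0 smaller than the injectivity radius of K (so that g ↦ gx is an isometry from B^G(1,ε₀) onto B^X(x,ε₀) for each x ∈ K). Then there exists ε = ε(ε₀,a) > 0 such that for every x ∈ K and every n ≥ 1, the map g ↦ gx is an isometric surjection from the Bowen ball D_n^G(1,ε) = {g : d^G(a^j g a^{-j},1) ≤ ε for 0 ≤ j ≤ n−1} onto the Bowen ball D_n^X(x,ε) = {y : d^X(a^j y, a^j x) ≤ ε for 0 ≤ j ≤ n−1}. -/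

import Mathlib

/-- Bowen balls in `X = G/Γ`, abstracted as a `G`-action: if the orbit map at every
point of a compact `a`-invariant set `K` is an isometric surjection from the
`ε₀`-ball of `G` onto the `ε₀`-ball of `X`, then there is `ε > 0` such that for all
`x ∈ K` and `n ≥ 1` the orbit map is an isometric surjection from the `n`-Bowen ball
of `G` at `1` onto the `n`-Bowen ball of `X` at `x`. -/
theorem stmt_5 {G X : Type*} [Group G] [MetricSpace G] [IsTopologicalGroup G]
    [MetricSpace X] [MulAction G X]
    (hrinv : ∀ g h x : G, dist (g * x) (h * x) = dist g h)
    (a : G) (K : Set X) (hK : IsCompact K) (hKinv : ∀ x ∈ K, a • x ∈ K)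
    (ε₀ : ℝ) (hε₀ : 0 < ε₀)
    (hinj : ∀ x ∈ K,
      (∀ g g' : G, dist g 1 < ε₀ → dist g' 1 < ε₀ →
        dist (g • x) (g' • x) = dist g g') ∧
      (∀ y : X, dist y x < ε₀ → ∃ g : G, dist g 1 < ε₀ ∧ y = g • x)) :
    ∃ ε > (0 : ℝ), ∀ x ∈ K, ∀ n : ℕ, 1 ≤ n →
      (∀ g : G, (∀ j < n, dist (a ^ j * g * (a ^ j)⁻¹) 1 ≤ ε) →
        ∀ j < n, dist ((a ^ j) • (g • x)) ((a ^ j) • x) ≤ ε) ∧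
      (∀ g g' : G, (∀ j < n, dist (a ^ j * g * (a ^ j)⁻¹) 1 ≤ ε) →
        (∀ j < n, dist (a ^ j * g' * (a ^ j)⁻¹) 1 ≤ ε) →
        dist (g • x) (g' • x) = dist g g') ∧
      (∀ y : X, (∀ j < n, dist ((a ^ j) • y) ((a ^ j) • x) ≤ ε) →
        ∃ g : G, (∀ j < n, dist (a ^ j * g * (a ^ j)⁻¹) 1 ≤ ε) ∧ y = g • x) := by
  have hconj : ContinuousAt (fun g : G => a * g * a⁻¹) 1 := by fun_prop
  rw [Metric.continuousAt_iff] at hconj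
  obtain ⟨δ, hδpos, hδ⟩ := hconj ε₀ hε₀
  set ε := min (δ / 2) (ε₀ / 2) with hεdef
  have hεpos : 0 < ε := lt_min (by linarith) (by linarith)
  have hεε₀ : ε < ε₀ := lt_of_le_of_lt (min_le_right _ _) (by linarith)
  have hεconj : ∀ g : G, dist g 1 ≤ ε → dist (a * g * a⁻¹) 1 < ε₀ := by
    intro g hg
    have h1 : dist g 1 < δ :=
      lt_of_le_of_lt hg (lt_of_le_of_lt (min_le_left _ _) (by linarith))
    have := hδ h1
    simpa using this
  have hKpow : ∀ (j : ℕ), ∀ x ∈ K, (a ^ j) • x ∈ K := by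
    intro j
    induction j with
    | zero => intro x hx; simpa using hx
    | succ m ih =>
      intro x hx
      rw [pow_succ, mul_smul]
      exact ih _ (hKinv x hx)
  refine ⟨ε, hεpos, fun x hx n hn => ⟨?_, ?_, ?_⟩⟩
  · intro g hg j hj
    have hz : (a ^ j) • x ∈ K := hKpow j x hx
    have h1 : (a ^ j) • (g • x) = (a ^ j * g * (a ^ j)⁻¹) • ((a ^ j) • x) := by
      rw [← mul_smul, ← mul_smul]
      congr 1
      group
    rw [h1]
    have hiso := (hinj _ hz).1 (a ^ j * g * (a ^ j)⁻¹) 1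
      (lt_of_le_of_lt (hg j hj) hεε₀) (by simpa using hε₀)
    rw [one_smul] at hiso
    rw [hiso]
    exact hg j hj
  · intro g g' hg hg'
    have h0 := hg 0 hn
    have h0' := hg' 0 hn
    simp only [pow_zero, one_mul, inv_one, mul_one] at h0 h0'
    exact (hinj x hx).1 g g' (lt_of_le_of_lt h0 hεε₀) (lt_of_le_of_lt h0' hεε₀)
  · have main : ∀ m : ℕ, ∀ y : X, (∀ j ≤ m, dist ((a ^ j) • y) ((a ^ j) • x) ≤ ε) →
        ∃ g : G, (∀ j ≤ m, dist (a ^ j * g * (a ^ j)⁻¹) 1 ≤ ε) ∧ y = g • x := by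
      intro m
      induction m with
      | zero =>
        intro y hy
        have h0 := hy 0 le_rfl
        simp only [pow_zero, one_smul] at h0
        obtain ⟨g, hg1, hg2⟩ := (hinj x hx).2 y (lt_of_le_of_lt h0 hεε₀)
        refine ⟨g, ?_, hg2⟩
        intro j hj
        interval_cases j
        simp only [pow_zero, one_mul, inv_one, mul_one]
        have hiso := (hinj x hx).1 g 1 hg1 (by simpa using hε₀)
        rw [one_smul] at hiso
        rw [← hiso, ← hg2]
        exact h0
      | succ m ih =>
        intro y hy
        obtain ⟨g, hg, hyg⟩ := ih y (fun j hj => hy j (hj.trans (Nat.le_succ m)))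
        refine ⟨g, ?_, hyg⟩
        intro j hj
        rcases Nat.lt_succ_iff_lt_or_eq.mp (Nat.lt_succ_of_le hj) with h | h
        · exact hg j (Nat.lt_succ_iff.mp h)
        · subst h
          have hm : dist (a ^ m * g * (a ^ m)⁻¹) 1 ≤ ε := hg m le_rfl
          have hrw : a ^ (m + 1) * g * (a ^ (m + 1))⁻¹
              = a * (a ^ m * g * (a ^ m)⁻¹) * a⁻¹ := by group
          have hlt : dist (a ^ (m + 1) * g * (a ^ (m + 1))⁻¹) 1 < ε₀ := by
            rw [hrw]; exact hεconj _ hm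
          have hz : (a ^ (m + 1)) • x ∈ K := hKpow (m + 1) x hx
          have hiso := (hinj _ hz).1 (a ^ (m + 1) * g * (a ^ (m + 1))⁻¹) 1
            hlt (by simpa using hε₀)
          rw [one_smul] at hiso
          have hsmul : (a ^ (m + 1) * g * (a ^ (m + 1))⁻¹) • ((a ^ (m + 1)) • x)
              = (a ^ (m + 1)) • y := by
            rw [hyg, ← mul_smul, ← mul_smul]
            congr 1
            group
          rw [hsmul] at hiso
          rw [← hiso]
          exact hy (m + 1) le_rfl
    intro y hy
    obtain ⟨m, rfl⟩ : ∃ m, n = m + 1 := ⟨n - 1, (Nat.succ_pred_eq_of_pos hn).symm⟩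
    obtain ⟨g, hg, hyg⟩ := main m y (fun j hj => hy j (Nat.lt_succ_of_le hj))
    exact ⟨g, fun j hj => hg j (Nat.lt_succ_iff.mp hj), hyg⟩
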